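/- Let λ > 0, x ∈ ℝ^M, y ∈ ℝ, P := (XᵀX + λI)⁻¹, θ_N := P XᵀY, and let θ₊ := (XᵀX + x xᵀ + λI)⁻¹(XᵀY + x y) be the ridge solution on the training set augmented by (x, y). Then the test residual satisfies y − x⊤θ₊ = (y − x⊤θ_N) / (1 + x⊤P x). -/

import Mathlib

open Matrix

lemma vecMulVec_mulVec' {M : ℕ} (x v : Fin M → ℝ) :
    (vecMulVec x x).mulVec v = (x ⬝ᵥ v) • x := by
  ext i
  simp [vecMulVec_apply, mulVec, dotProduct, Finset.mul_sum, mul_comm, mul_assoc, mul_left_comm]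

/-- Test residual of the ridge solution on the training set augmented by `(x, y)`:
`y − xᵀθ₊ = (y − xᵀθ_N) / (1 + xᵀP x)` with `P = (XᵀX + λI)⁻¹`. -/
theorem ridge_residual {N M : ℕ}
    (X : Matrix (Fin N) (Fin M) ℝ) (Y : Fin N → ℝ)
    (lam : ℝ) (hlam : 0 < lam) (x : Fin M → ℝ) (y : ℝ)
    (P : Matrix (Fin M) (Fin M) ℝ)
    (hP : P = (Xᵀ * X + lam • (1 : Matrix (Fin M) (Fin M) ℝ))⁻¹)
    (θN : Fin M → ℝ) (hθN : θN = P.mulVec (Xᵀ.mulVec Y))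
    (θp : Fin M → ℝ)
    (hθp : θp = (Xᵀ * X + vecMulVec x x + lam • (1 : Matrix (Fin M) (Fin M) ℝ))⁻¹.mulVec
      (Xᵀ.mulVec Y + y • x)) :
    y - x ⬝ᵥ θp = (y - x ⬝ᵥ θN) / (1 + x ⬝ᵥ P.mulVec x) := by
  set A : Matrix (Fin M) (Fin M) ℝ := Xᵀ * X + lam • (1 : Matrix (Fin M) (Fin M) ℝ) with hA
  set B : Matrix (Fin M) (Fin M) ℝ :=
    Xᵀ * X + vecMulVec x x + lam • (1 : Matrix (Fin M) (Fin M) ℝ) with hB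
  have hsmul : (lam • (1 : Matrix (Fin M) (Fin M) ℝ)).PosDef := by
    rw [smul_one_eq_diagonal]
    exact .diagonal fun _ => hlam
  have hXX : (Xᵀ * X).PosSemidef := by
    simpa using posSemidef_conjTranspose_mul_self X
  have hxx : (vecMulVec x x).PosSemidef := by
    refine Matrix.PosSemidef.of_dotProduct_mulVec_nonneg ?_ ?_
    · ext i j
      simp [conjTranspose_apply, vecMulVec_apply, mul_comm]
    · intro v
      rw [show star v = v from rfl, vecMulVec_mulVec']
      simp only [dotProduct_smul, smul_eq_mul]
      rw [dotProduct_comm]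
      exact mul_self_nonneg _
  have hApos : A.PosDef := Matrix.PosDef.posSemidef_add hXX hsmul
  have hBpos : B.PosDef := Matrix.PosDef.posSemidef_add (hXX.add hxx) hsmul
  have hAP : A * P = 1 := by rw [hP]; exact mul_nonsing_inv _ hApos.det_pos.ne'.isUnit
  have hPpos : P.PosDef := hP ▸ hApos.inv
  have hs : 0 ≤ x ⬝ᵥ P.mulVec x := by
    have := hPpos.posSemidef.dotProduct_mulVec_nonneg x
    simpa using this
  set s := x ⬝ᵥ P.mulVec x with hsdef
  have hs1 : (1 : ℝ) + s ≠ 0 := by positivity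
  set c := (y - x ⬝ᵥ θN) / (1 + s) with hc
  set θc := θN + c • P.mulVec x with hθc
  have hBθc : B.mulVec θc = Xᵀ.mulVec Y + y • x := by
    have hAθN : A.mulVec θN = Xᵀ.mulVec Y := by
      rw [hθN, mulVec_mulVec, hAP, one_mulVec]
    have hAPx : A.mulVec (P.mulVec x) = x := by
      rw [mulVec_mulVec, hAP, one_mulVec]
    have hBA : B = A + vecMulVec x x := by rw [hA, hB, add_right_comm]
    rw [hBA, hθc, add_mulVec, mulVec_add, mulVec_add, mulVec_smul, mulVec_smul, hAθN, hAPx,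
      vecMulVec_mulVec', vecMulVec_mulVec']
    have key : c • x + ((x ⬝ᵥ θN) • x + c • (x ⬝ᵥ P.mulVec x) • x) = y • x := by
      rw [smul_smul, ← add_smul, ← add_smul]
      congr 1
      rw [hc, ← hsdef]
      field_simp
      ring
    rw [add_assoc, key]
  have hθpc : θp = θc := by
    rw [hθp, ← hBθc, mulVec_mulVec, nonsing_inv_mul _ hBpos.det_pos.ne'.isUnit, one_mulVec]
  rw [hθpc, hθc, dotProduct_add, dotProduct_smul]
  rw [hc, ← hsdef]
  simp only [smul_eq_mul]
  field_simp
  ring
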